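/- Let A be the singular (or simplicial) cochain algebra of a Δ-complex over a commutative ring R, with Steenrod's cup-one product. Then there is no fixed ℤ-linear combination of cup products, cup products of cup-one products (of the forms (u_{i}∪₁u_{j})∪u_{k}, u_{i}∪(u_{j}∪₁u_{k}), (u_{i}∪₁u_{j})∪(u_{k}∪₁u_{l}), and u_{i}∪u_{j}) with constant coefficients that equals u₃ ∪₁ (u₁ ∪ u₂) for all 1-cochains u₁, u₂, u₃ on all Δ-complexes. -/

import Mathlib

/-- The 2-truncation of a Δ-complex, which is all that is relevant here: a type of
1-simplices, a type of 2-simplices, and the three face maps of a 2-simplex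
`[0,1,2]`: the front face `[0,1]`, the back face `[1,2]`, and the third face
`[0,2]`. -/
structure DeltaTwoComplex where
  E : Type
  S : Type
  front : S → E
  back : S → E
  third : S → E

namespace DeltaTwoComplex

/-- The cup product of 1-cochains: `(u ∪ v)([i,j,k]) = u([i,j]) · v([j,k])`. -/
def cupC (X : DeltaTwoComplex) (u v : X.E → ℤ) : X.S → ℤ :=
  fun s => u (X.front s) * v (X.back s)

/-- Steenrod's cup-one product of 1-cochains: `(u ∪₁ v)(e) = u(e) · v(e)`. -/
def cup1C (X : DeltaTwoComplex) (u v : X.E → ℤ) : X.E → ℤ :=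
  fun e => u e * v e

/-- Steenrod's cup-one product of a 1-cochain and a 2-cochain:
`(u ∪₁ z)(s) = −u(e₃) · z(s)`, where `e₃` is the third face of `s`. -/
def cup1TwoC (X : DeltaTwoComplex) (u : X.E → ℤ) (z : X.S → ℤ) : X.S → ℤ :=
  fun s => -u (X.third s) * z s

end DeltaTwoComplex

open DeltaTwoComplex

/-- There is no fixed ℤ-linear combination of cup products, cup products of
cup-one products — of the forms `(u_i ∪₁ u_j) ∪ u_k`, `u_i ∪ (u_j ∪₁ u_k)`,
`(u_i ∪₁ u_j) ∪ (u_k ∪₁ u_l)`, and `u_i ∪ u_j` — with constant coefficients that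
equals `u₃ ∪₁ (u₁ ∪ u₂)` for all 1-cochains `u₁, u₂, u₃` on all Δ-complexes. -/
theorem stmt_12 :
    ¬∃ (α₁ : Fin 3 → Fin 3 → Fin 3 → ℤ) (α₂ : Fin 3 → Fin 3 → Fin 3 → ℤ)
        (α₃ : Fin 3 → Fin 3 → Fin 3 → Fin 3 → ℤ) (α₄ : Fin 3 → Fin 3 → ℤ),
      ∀ (X : DeltaTwoComplex) (u : Fin 3 → X.E → ℤ),
        cup1TwoC X (u 2) (cupC X (u 0) (u 1))
          = (∑ i : Fin 3, ∑ j : Fin 3, ∑ k : Fin 3,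
                α₁ i j k • cupC X (cup1C X (u i) (u j)) (u k))
            + (∑ i : Fin 3, ∑ j : Fin 3, ∑ k : Fin 3,
                α₂ i j k • cupC X (u i) (cup1C X (u j) (u k)))
            + (∑ i : Fin 3, ∑ j : Fin 3, ∑ k : Fin 3, ∑ l : Fin 3,
                α₃ i j k l • cupC X (cup1C X (u i) (u j)) (cup1C X (u k) (u l)))
            + (∑ i : Fin 3, ∑ j : Fin 3, α₄ i j • cupC X (u i) (u j)) := by
  rintro ⟨α₁, α₂, α₃, α₄, h⟩
  -- a complex with three distinct edges and one 2-simplex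
  set X : DeltaTwoComplex :=
    ⟨Fin 3, Unit, fun _ => 0, fun _ => 1, fun _ => 2⟩ with hX
  -- two cochain families agreeing on front/back edges, differing on the third
  set u : Fin 3 → Fin 3 → ℤ := fun _ _ => 1 with hu
  set v : Fin 3 → Fin 3 → ℤ := fun _ e => if e = 2 then 2 else 1 with hv
  have h1 := congrFun (h X u) ()
  have h2 := congrFun (h X v) ()
  -- the RHS terms agree for u and v since front/back values agree
  have key : (-1 : ℤ) = -2 := by
    have e1 : cup1TwoC X (u 2) (cupC X (u 0) (u 1)) () = -1 := by
      simp [cup1TwoC, cupC, hu, hX]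
    have e2 : cup1TwoC X (v 2) (cupC X (v 0) (v 1)) () = -2 := by
      simp [cup1TwoC, cupC, hv, hX, X]
    rw [e1] at h1; rw [e2] at h2
    rw [h1, h2]
    simp [cupC, cup1C, hu, hv, hX, X]
  omega
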